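/- Let θ > 1 be real, let d ∈ ℕ, let c_1,…,c_d > 0 be reals, let M ≥ 1 be real, and let κ > 1/θ. Then the set {l = (l_1,…,l_d) ∈ ℤ^d : ∏_{j=1}^d (r_{θ,c_j}(l_j))^{-1} ≤ M} is finite and its cardinality is at most M^κ · ∏_{j=1}^d (1 + 2ζ(θκ) c_j^κ), where ζ is the Riemann zeta function. -/
import Mathlib


open scoped BigOperators

/-- The Korobov-space decay function r_{θ,c} : ℤ → ℝ,
    r_{θ,c}(0) = 1 and r_{θ,c}(l) = c·|l|^{-θ} for l ≠ 0. -/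
noncomputable def rK (θ c : ℝ) (l : ℤ) : ℝ :=
  if l = 0 then 1 else c * |(l : ℝ)| ^ (-θ)

/-- The Riemann zeta function, viewed as a real-valued function of a real argument. -/
noncomputable def zetaR (x : ℝ) : ℝ := (riemannZeta (x : ℂ)).re

lemma rK_pos {θ c : ℝ} (hc : 0 < c) (l : ℤ) : 0 < rK θ c l := by
  unfold rK
  split_ifs with h
  · norm_num
  · have : (0:ℝ) < |(l:ℝ)| := by
      simp only [abs_pos, ne_eq, Int.cast_eq_zero]; exact h
    positivity

lemma zetaR_eq {s : ℝ} (hs : 1 < s) :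
    zetaR s = ∑' n : ℕ, ((n : ℝ) + 1) ^ (-s) := by
  have hre : 1 < Complex.re (s : ℂ) := by simpa using hs
  have h := zeta_eq_tsum_one_div_nat_add_one_cpow hre
  have hterm : ∀ n : ℕ, (1 / ((n : ℂ) + 1) ^ (s : ℂ)) = ((((n:ℝ)+1) ^ (-s) : ℝ) : ℂ) := by
    intro n
    have hnn : (0:ℝ) ≤ (n:ℝ) + 1 := by positivity
    rw [Real.rpow_neg hnn, Complex.ofReal_inv, Complex.ofReal_cpow hnn]
    push_cast
    rw [one_div]
  have hsum : Summable (fun n : ℕ => ((n : ℝ) + 1) ^ (-s)) := by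
    have := (Real.summable_one_div_nat_add_rpow 1 s).mpr hs
    refine this.congr fun n => ?_
    rw [Real.rpow_neg (by positivity), one_div, abs_of_nonneg (by positivity)]
  unfold zetaR
  rw [h]
  calc (∑' n : ℕ, 1 / ((n : ℂ) + 1) ^ (s : ℂ)).re
      = (∑' n : ℕ, ((((n:ℝ)+1) ^ (-s) : ℝ) : ℂ)).re := by
        congr 1; exact tsum_congr hterm
    _ = ∑' n : ℕ, ((n : ℝ) + 1) ^ (-s) := by
        rw [Complex.re_tsum]
        · simp
        · exact (Complex.summable_ofReal).mpr hsum

set_option maxHeartbeats 1000000 in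
lemma rK_rpow_hasSum {θ c κ : ℝ} (hc : 0 < c) (hs : 1 < θ * κ) :
    HasSum (fun l : ℤ => rK θ c l ^ κ) (1 + 2 * zetaR (θ * κ) * c ^ κ) := by
  set s := θ * κ with hsdef
  -- the basic nat sum
  have hZsum : Summable (fun n : ℕ => ((n : ℝ) + 1) ^ (-s)) := by
    have := (Real.summable_one_div_nat_add_rpow 1 s).mpr hs
    refine this.congr fun n => ?_
    rw [Real.rpow_neg (by positivity), one_div, abs_of_nonneg (by positivity)]
  set Z := ∑' n : ℕ, ((n : ℝ) + 1) ^ (-s) with hZ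
  have hZhas : HasSum (fun n : ℕ => ((n : ℝ) + 1) ^ (-s)) Z := hZsum.hasSum
  have hval : ∀ l : ℤ, l ≠ 0 → rK θ c l ^ κ = c ^ κ * |(l:ℝ)| ^ (-s) := by
    intro l hl
    have habs : (0:ℝ) ≤ |(l:ℝ)| := abs_nonneg _
    rw [rK, if_neg hl, Real.mul_rpow hc.le (Real.rpow_nonneg habs _),
      ← Real.rpow_mul habs, hsdef, neg_mul]
  -- positive side: n ↦ rK θ c (n+1) ^ κ
  have hpos : HasSum (fun n : ℕ => rK θ c ((n:ℤ)+1) ^ κ) (c ^ κ * Z) := by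
    refine (hZhas.mul_left (c ^ κ)).congr_fun fun n => ?_
    rw [hval ((n:ℤ)+1) (by omega)]
    congr 2
    push_cast
    rw [abs_of_nonneg (by positivity)]
  have hnat : HasSum (fun n : ℕ => rK θ c (n:ℤ) ^ κ) (c ^ κ * Z + 1) := by
    have h2 := (hasSum_nat_add_iff (f := fun n : ℕ => rK θ c (n:ℤ) ^ κ) 1
        (g := c ^ κ * Z)).mp (hpos.congr_fun fun n => by norm_cast)
    simpa [rK] using h2
  have hneg : HasSum (fun n : ℕ => rK θ c (-((n:ℤ)+1)) ^ κ) (c ^ κ * Z) := by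
    refine (hZhas.mul_left (c ^ κ)).congr_fun fun n => ?_
    rw [hval (-((n:ℤ)+1)) (by omega)]
    congr 2
    push_cast
    rw [abs_neg, abs_of_nonneg (by positivity)]
  have htot := HasSum.of_nat_of_neg_add_one (f := fun l : ℤ => rK θ c l ^ κ) hnat hneg
  have hZzeta : Z = zetaR s := (zetaR_eq hs).symm
  have heq : (c ^ κ * Z + 1) + c ^ κ * Z = 1 + 2 * zetaR s * c ^ κ := by
    rw [hZzeta]; ring
  rw [← heq]
  exact htot

set_option maxHeartbeats 1000000 in
theorem stmt_3 (θ : ℝ) (hθ : 1 < θ) (d : ℕ) (c : Fin d → ℝ) (hc : ∀ j, 0 < c j)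
    (M : ℝ) (hM : 1 ≤ M) (κ : ℝ) (hκ : 1 / θ < κ) :
    {l : Fin d → ℤ | (∏ j : Fin d, (rK θ (c j) (l j))⁻¹) ≤ M}.Finite ∧
      (({l : Fin d → ℤ | (∏ j : Fin d, (rK θ (c j) (l j))⁻¹) ≤ M}).ncard : ℝ) ≤
        M ^ κ * ∏ j : Fin d, (1 + 2 * zetaR (θ * κ) * (c j) ^ κ) := by
  have hθ0 : (0:ℝ) < θ := lt_trans one_pos hθ
  have hκ0 : 0 < κ := lt_trans (by positivity) hκ
  have hs : 1 < θ * κ := by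
    have := (div_lt_iff₀' hθ0).mp hκ
    linarith
  set S := {l : Fin d → ℤ | (∏ j : Fin d, (rK θ (c j) (l j))⁻¹) ≤ M} with hS
  set B : Fin d → ℝ := fun j => 1 + 2 * zetaR (θ * κ) * (c j) ^ κ with hB
  have hBhas : ∀ j, HasSum (fun l : ℤ => rK θ (c j) l ^ κ) (B j) :=
    fun j => rK_rpow_hasSum (hc j) hs
  have hg_nonneg : ∀ (j : Fin d) (l : ℤ), 0 ≤ rK θ (c j) l ^ κ :=
    fun j l => Real.rpow_nonneg (rK_pos (hc j) l).le _
  have hB_nonneg : ∀ j, 0 ≤ B j := by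
    intro j
    have := (hBhas j).tsum_eq
    rw [← this]
    exact tsum_nonneg (hg_nonneg j)
  -- key pointwise bound: for l ∈ S, 1 ≤ M ^ κ * ∏ j, rK θ (c j) (l j) ^ κ
  have hpoint : ∀ l ∈ S, 1 ≤ M ^ κ * ∏ j : Fin d, rK θ (c j) (l j) ^ κ := by
    intro l hl
    have hprod_pos : 0 < ∏ j : Fin d, rK θ (c j) (l j) :=
      Finset.prod_pos fun j _ => rK_pos (hc j) (l j)
    have h1 : (∏ j : Fin d, rK θ (c j) (l j))⁻¹ ≤ M := by
      have := hl
      rw [hS, Set.mem_setOf_eq] at this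
      simpa [Finset.prod_inv_distrib] using this
    have hMpos : (0:ℝ) < M := by linarith
    have h1' : 1 ≤ M * ∏ j : Fin d, rK θ (c j) (l j) := by
      have := mul_le_mul_of_nonneg_right h1 hprod_pos.le
      rwa [inv_mul_cancel₀ hprod_pos.ne'] at this
    have h2 : M⁻¹ ≤ ∏ j : Fin d, rK θ (c j) (l j) := by
      rw [← one_div, div_le_iff₀ hMpos]
      linarith [mul_comm M (∏ j : Fin d, rK θ (c j) (l j))]
    have h3 : (M⁻¹) ^ κ ≤ (∏ j : Fin d, rK θ (c j) (l j)) ^ κ :=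
      Real.rpow_le_rpow (by positivity) h2 hκ0.le
    rw [Real.inv_rpow hMpos.le,
      ← Real.finset_prod_rpow _ _ (fun j _ => (rK_pos (hc j) (l j)).le) κ] at h3
    have hMκ : (0:ℝ) < M ^ κ := Real.rpow_pos_of_pos hMpos κ
    have := mul_le_mul_of_nonneg_left h3 hMκ.le
    rwa [mul_inv_cancel₀ hMκ.ne'] at this
  -- any finite subset of S has card bounded by the RHS
  have hkey : ∀ T : Finset (Fin d → ℤ), ↑T ⊆ S →
      (T.card : ℝ) ≤ M ^ κ * ∏ j : Fin d, B j := by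
    intro T hT
    have step1 : (T.card : ℝ) ≤ ∑ l ∈ T, M ^ κ * ∏ j : Fin d, rK θ (c j) (l j) ^ κ := by
      calc (T.card : ℝ) = ∑ _l ∈ T, (1:ℝ) := by simp
        _ ≤ _ := Finset.sum_le_sum fun l hl => hpoint l (hT hl)
    rw [← Finset.mul_sum] at step1
    refine step1.trans ?_
    have hMκ : (0:ℝ) ≤ M ^ κ := Real.rpow_nonneg (by linarith) κ
    refine mul_le_mul_of_nonneg_left ?_ hMκ
    -- bound the sum over T by a product of one-dimensional sums
    set t : Fin d → Finset ℤ := fun j => T.image (fun l => l j) with ht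
    have hsub : T ⊆ Fintype.piFinset t := by
      intro l hl
      rw [Fintype.mem_piFinset]
      exact fun j => Finset.mem_image_of_mem _ hl
    calc ∑ l ∈ T, ∏ j : Fin d, rK θ (c j) (l j) ^ κ
        ≤ ∑ l ∈ Fintype.piFinset t, ∏ j : Fin d, rK θ (c j) (l j) ^ κ := by
          refine Finset.sum_le_sum_of_subset_of_nonneg hsub fun l _ _ => ?_
          exact Finset.prod_nonneg fun j _ => hg_nonneg j (l j)
      _ = ∏ j : Fin d, ∑ x ∈ t j, rK θ (c j) x ^ κ := (Finset.prod_univ_sum t (fun j x => rK θ (c j) x ^ κ)).symm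
      _ ≤ ∏ j : Fin d, B j := by
          refine Finset.prod_le_prod (fun j _ => Finset.sum_nonneg fun x _ => hg_nonneg j x)
            fun j _ => ?_
          rw [← (hBhas j).tsum_eq]
          exact Summable.sum_le_tsum (t j) (fun x _ => hg_nonneg j x) (hBhas j).summable
  -- finiteness
  have hfin : S.Finite := by
    by_contra hinf
    have hinf' : S.Infinite := hinf
    obtain ⟨t', ht's, ht'fin, ht'card⟩ :=
      hinf'.exists_subset_ncard_eq (⌈M ^ κ * ∏ j : Fin d, B j⌉₊ + 1)
    have := hkey ht'fin.toFinset (by simpa using ht's)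
    rw [Set.ncard_eq_toFinset_card t' ht'fin] at ht'card
    rw [ht'card] at this
    have h1 : M ^ κ * ∏ j : Fin d, B j ≤ ⌈M ^ κ * ∏ j : Fin d, B j⌉₊ := Nat.le_ceil _
    push_cast at this
    linarith
  refine ⟨hfin, ?_⟩
  have := hkey hfin.toFinset (by simp)
  rwa [← Set.ncard_eq_toFinset_card S hfin] at this
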